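/- Transferability bound (Theorem 1, abstract form): Let C be an arbitrary set of 'source classifiers', each c ∈ C assigning to every index i a probability distribution c_i on 𝒵, and let the source log-likelihood be l_Z(c) = (1/n) Σ_i log c_i(z_i). Let K be a set of 'target classifiers', each k ∈ K assigning to every i a probability distribution k_i on 𝒴, with target log-likelihood l_Y(k) = (1/n) Σ_i log k_i(y_i). Fix c* ∈ C with c*_i(z_i) > 0 for all i, and suppose K contains the classifier k̄ defined by k̄_i(a) = Σ_{b∈𝒵} P̂(a|b) c*_i(b). Then max_{k∈K} l_Y(k) ≥ l_Z(c*) - H(Y|Z). -/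
import Mathlib


open Finset Real

noncomputable def Pjoint {n : ℕ} {Y Z : Type*} [Fintype Y] [Fintype Z]
    [DecidableEq Y] [DecidableEq Z] (y : Fin n → Y) (z : Fin n → Z) (a : Y) (b : Z) : ℝ :=
  ((Finset.univ.filter fun i => y i = a ∧ z i = b).card : ℝ) / n

noncomputable def Pmarg {n : ℕ} {Z : Type*} [Fintype Z] [DecidableEq Z]
    (z : Fin n → Z) (b : Z) : ℝ :=
  ((Finset.univ.filter fun i => z i = b).card : ℝ) / n

open scoped Classical in
/-- Empirical conditional entropy H(Y|Z). -/
noncomputable def condEnt {n : ℕ} {Y Z : Type*} [Fintype Y] [Fintype Z]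
    [DecidableEq Y] [DecidableEq Z] (y : Fin n → Y) (z : Fin n → Z) : ℝ :=
  -∑ a : Y, ∑ b : Z, if 0 < Pjoint y z a b then
      Pjoint y z a b * Real.log (Pjoint y z a b / Pmarg z b) else 0

open scoped Classical in
/-- Empirical entropy of a label sequence. -/
noncomputable def entOf {n : ℕ} {Z : Type*} [Fintype Z] [DecidableEq Z]
    (z : Fin n → Z) : ℝ :=
  -∑ b : Z, if 0 < Pmarg z b then Pmarg z b * Real.log (Pmarg z b) else 0


section
variable {n : ℕ} {Y Z : Type*} [Fintype Y] [Fintype Z] [DecidableEq Y] [DecidableEq Z]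

lemma Pjoint_nonneg (y : Fin n → Y) (z : Fin n → Z) (a : Y) (b : Z) :
    0 ≤ Pjoint y z a b := by
  unfold Pjoint; positivity

lemma Pmarg_nonneg (z : Fin n → Z) (b : Z) : 0 ≤ Pmarg z b := by
  unfold Pmarg; positivity

open scoped Classical in
lemma entropy_sum (hn : 1 ≤ n) (y : Fin n → Y) (z : Fin n → Z) :
    (1 / n : ℝ) * ∑ i : Fin n, Real.log (Pjoint y z (y i) (z i) / Pmarg z (z i))
      = -condEnt y z := by
  have hn0 : (0:ℝ) < n := by exact_mod_cast hn
  set g : Y → Z → ℝ := fun a b => Real.log (Pjoint y z a b / Pmarg z b) with hg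
  have key : ∑ i : Fin n, g (y i) (z i)
      = ∑ p : Y × Z, ((univ.filter fun i => y i = p.1 ∧ z i = p.2).card : ℝ) * g p.1 p.2 := by
    rw [← Finset.sum_fiberwise univ (fun i => (y i, z i)) (fun i => g (y i) (z i))]
    refine Finset.sum_congr rfl fun p _ => ?_
    have : ∀ i ∈ univ.filter (fun i => (y i, z i) = p), g (y i) (z i) = g p.1 p.2 := by
      intro i hi
      simp only [mem_filter, Prod.ext_iff] at hi
      rw [hi.2.1, hi.2.2]
    rw [Finset.sum_congr rfl this, Finset.sum_const, nsmul_eq_mul]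
    congr 2
    apply Finset.card_bij (fun i _ => i) <;> simp [Prod.ext_iff] <;> tauto
  rw [key, Finset.mul_sum, condEnt, neg_neg, ← Fintype.sum_prod_type']
  refine Finset.sum_congr rfl fun p _ => ?_
  have hP : Pjoint y z p.1 p.2 = ((univ.filter fun i => y i = p.1 ∧ z i = p.2).card : ℝ) / n := rfl
  split_ifs with h
  · simp only [hg]; rw [hP]; ring
  · have : Pjoint y z p.1 p.2 = 0 := le_antisymm (not_lt.mp h) (Pjoint_nonneg y z p.1 p.2)
    rw [hP] at this
    rw [div_eq_zero_iff] at this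
    rcases this with h' | h'
    · rw [h']; ring
    · exact absurd h' (ne_of_gt hn0)

end

theorem stmt16 {n : ℕ} (hn : 1 ≤ n) {Y Z : Type*} [Fintype Y] [Fintype Z]
    [DecidableEq Y] [DecidableEq Z] (y : Fin n → Y) (z : Fin n → Z)
    (C : Set (Fin n → Z → ℝ)) (K : Set (Fin n → Y → ℝ))
    (hCdist : ∀ c ∈ C, ∀ i, (∀ b, 0 ≤ c i b) ∧ ∑ b : Z, c i b = 1)
    (hKdist : ∀ k ∈ K, ∀ i, (∀ a, 0 ≤ k i a) ∧ ∑ a : Y, k i a = 1)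
    (cstar : Fin n → Z → ℝ) (hcC : cstar ∈ C)
    (hcz : ∀ i, 0 < cstar i (z i))
    (hcnull : ∀ i b, Pmarg z b = 0 → cstar i b = 0)
    (hkbar : (fun i a => ∑ b : Z, (Pjoint y z a b / Pmarg z b) * cstar i b) ∈ K)
    (kmax : Fin n → Y → ℝ) (hkmaxK : kmax ∈ K)
    (hkmax : ∀ k ∈ K, (1 / n : ℝ) * ∑ i : Fin n, Real.log (k i (y i)) ≤
        (1 / n : ℝ) * ∑ i : Fin n, Real.log (kmax i (y i))) :
    (1 / n : ℝ) * ∑ i : Fin n, Real.log (kmax i (y i)) ≥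
      (1 / n : ℝ) * ∑ i : Fin n, Real.log (cstar i (z i)) - condEnt y z := by
  have hn0 : (0:ℝ) < n := by exact_mod_cast hn
  set kbar : Fin n → Y → ℝ := fun i a => ∑ b : Z, (Pjoint y z a b / Pmarg z b) * cstar i b with hkb
  have hPj : ∀ i, 0 < Pjoint y z (y i) (z i) := by
    intro i
    apply div_pos _ hn0
    have hi : i ∈ univ.filter fun j => y j = y i ∧ z j = z i := by simp
    exact_mod_cast Finset.card_pos.mpr ⟨i, hi⟩
  have hPm : ∀ i, 0 < Pmarg z (z i) := by
    intro i
    apply div_pos _ hn0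
    have hi : i ∈ univ.filter fun j => z j = z i := by simp
    exact_mod_cast Finset.card_pos.mpr ⟨i, hi⟩
  have hpt : ∀ i : Fin n,
      Real.log (Pjoint y z (y i) (z i) / Pmarg z (z i)) + Real.log (cstar i (z i))
        ≤ Real.log (kbar i (y i)) := by
    intro i
    have hr : 0 < Pjoint y z (y i) (z i) / Pmarg z (z i) := div_pos (hPj i) (hPm i)
    have h1 : (Pjoint y z (y i) (z i) / Pmarg z (z i)) * cstar i (z i) ≤ kbar i (y i) := by
      refine Finset.single_le_sum (f := fun b => (Pjoint y z (y i) b / Pmarg z b) * cstar i b)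
        (fun b _ => mul_nonneg (div_nonneg (Pjoint_nonneg y z _ _) (Pmarg_nonneg z _))
          ((hCdist cstar hcC i).1 b)) (mem_univ (z i))
    calc Real.log (Pjoint y z (y i) (z i) / Pmarg z (z i)) + Real.log (cstar i (z i))
        = Real.log ((Pjoint y z (y i) (z i) / Pmarg z (z i)) * cstar i (z i)) :=
          (Real.log_mul (ne_of_gt hr) (ne_of_gt (hcz i))).symm
      _ ≤ Real.log (kbar i (y i)) :=
          Real.log_le_log (mul_pos hr (hcz i)) h1
  have step : (1 / n : ℝ) * ∑ i : Fin n, Real.log (cstar i (z i)) - condEnt y z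
      ≤ (1 / n : ℝ) * ∑ i : Fin n, Real.log (kbar i (y i)) := by
    have h2 : ∑ i : Fin n,
        (Real.log (Pjoint y z (y i) (z i) / Pmarg z (z i)) + Real.log (cstar i (z i)))
          ≤ ∑ i : Fin n, Real.log (kbar i (y i)) :=
      Finset.sum_le_sum fun i _ => hpt i
    have h3 := mul_le_mul_of_nonneg_left h2 (le_of_lt (one_div_pos.mpr hn0))
    calc (1 / n : ℝ) * ∑ i : Fin n, Real.log (cstar i (z i)) - condEnt y z
        = (1 / n : ℝ) * ∑ i : Fin n, Real.log (cstar i (z i)) +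
            (1 / n : ℝ) * ∑ i : Fin n, Real.log (Pjoint y z (y i) (z i) / Pmarg z (z i)) := by
          rw [entropy_sum hn y z]; ring
      _ = (1 / n : ℝ) * ∑ i : Fin n,
            (Real.log (Pjoint y z (y i) (z i) / Pmarg z (z i)) + Real.log (cstar i (z i))) := by
          rw [Finset.sum_add_distrib]; ring
      _ ≤ (1 / n : ℝ) * ∑ i : Fin n, Real.log (kbar i (y i)) := h3
  calc (1 / n : ℝ) * ∑ i : Fin n, Real.log (cstar i (z i)) - condEnt y z
      ≤ (1 / n : ℝ) * ∑ i : Fin n, Real.log (kbar i (y i)) := step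
    _ ≤ (1 / n : ℝ) * ∑ i : Fin n, Real.log (kmax i (y i)) := hkmax kbar hkbar
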